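/- The recursion operator R₋ is the conjugate of multiplication by x by the diagonal operator determined by the negative-index content-product coefficients: R₋ = C̃⁻¹ ∘ M_x ∘ C̃ as R-linear endomorphisms of formal Laurent series, where C̃ is the invertible diagonal operator (C̃ f)_n = ρ_{−n} • f_n and M_x is multiplication by x. (This is the concrete form of the identity R₋ = e^{−T(−D)} ∘ x ∘ e^{T(−D)}, where e^{T_j} = ρ_j.) -/

import Mathlib

open Polynomial

/-- The Euler operator `D = x d/dx` on formal Laurent series: `(D f)_n = n • f_n`. -/
noncomputable def eulerD (R : Type*) [CommRing R] : Module.End R (LaurentSeries R) where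
  toFun f :=
    { coeff := fun n => n • f.coeff n
      isPWO_support' := f.isPWO_support'.mono (fun n hn => by
        simp only [Function.mem_support, ne_eq] at hn ⊢
        exact fun h => hn (by rw [h, smul_zero])) }
  map_add' f g := by
    ext n
    simp [smul_add]
  map_smul' r f := by
    ext n
    simp only [HahnSeries.coeff_smul, RingHom.id_apply, zsmul_eq_mul, smul_eq_mul]
    ring

/-- Multiplication by a fixed Laurent series `u`, as an `R`-linear endomorphism. -/
noncomputable def mulOp (R : Type*) [CommRing R] (u : LaurentSeries R) :
    Module.End R (LaurentSeries R) where
  toFun f := u * f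
  map_add' f g := mul_add u f g
  map_smul' r f := by
    simp only [RingHom.id_apply]
    rw [← HahnSeries.C_mul_eq_smul, ← HahnSeries.C_mul_eq_smul, mul_left_comm]

/-- Multiplication by `x` on formal Laurent series. -/
noncomputable def mulX (R : Type*) [CommRing R] : Module.End R (LaurentSeries R) :=
  mulOp R (HahnSeries.single (1 : ℤ) (1 : R))

/-- The recursion operator `R₊ = γ x G(β D)`. -/
noncomputable def Rplus (R : Type*) [CommRing R] (β γ : R) (G : R[X]) :
    Module.End R (LaurentSeries R) :=
  γ • (mulX R ∘ₗ Polynomial.aeval (β • eulerD R) G)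

/-- The recursion operator `R₋ = γ x G(−β D)`. -/
noncomputable def Rminus (R : Type*) [CommRing R] (β γ : R) (G : R[X]) :
    Module.End R (LaurentSeries R) :=
  γ • (mulX R ∘ₗ Polynomial.aeval ((-β) • eulerD R) G)


/-- The diagonal operator `(C̃ f)_n = d n • f_n` on formal Laurent series. -/
noncomputable def diagOp (R : Type*) [CommRing R] (d : ℤ → R) :
    Module.End R (LaurentSeries R) where
  toFun f :=
    { coeff := fun n => d n * f.coeff n
      isPWO_support' := f.isPWO_support'.mono (fun n hn => by
        simp only [Function.mem_support, ne_eq] at hn ⊢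
        exact fun h => hn (by rw [h, mul_zero])) }
  map_add' f g := by
    ext n
    simp [mul_add]
  map_smul' r f := by
    ext n
    simp only [HahnSeries.coeff_smul, RingHom.id_apply, smul_eq_mul]
    ring

lemma diagOp_coeff {R : Type*} [CommRing R] (d : ℤ → R) (f : LaurentSeries R) (n : ℤ) :
    (diagOp R d f).coeff n = d n * f.coeff n := rfl

lemma eulerD_coeff {R : Type*} [CommRing R] (f : LaurentSeries R) (n : ℤ) :
    (eulerD R f).coeff n = (n : R) * f.coeff n := by
  simp [eulerD, zsmul_eq_mul]

lemma smul_eulerD_pow_coeff {R : Type*} [CommRing R] (c : R) (k : ℕ)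
    (f : LaurentSeries R) (n : ℤ) :
    (((c • eulerD R) ^ k) f).coeff n = (c * n) ^ k * f.coeff n := by
  induction k with
  | zero => simp
  | succ k ih =>
    rw [pow_succ', Module.End.mul_apply, LinearMap.smul_apply, HahnSeries.coeff_smul,
      eulerD_coeff, ih, pow_succ']
    simp only [smul_eq_mul]
    ring

lemma aeval_smul_eulerD_coeff {R : Type*} [CommRing R] (c : R) (G : R[X])
    (f : LaurentSeries R) (n : ℤ) :
    ((Polynomial.aeval (c • eulerD R) G) f).coeff n = G.eval (c * n) * f.coeff n := by
  induction G using Polynomial.induction_on' with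
  | add p q hp hq =>
    rw [map_add, LinearMap.add_apply, HahnSeries.coeff_add, hp, hq, Polynomial.eval_add]
    ring
  | monomial k a =>
    rw [Polynomial.aeval_monomial, Module.End.mul_apply, Module.algebraMap_end_apply,
      HahnSeries.coeff_smul, smul_eulerD_pow_coeff, Polynomial.eval_monomial,
      smul_eq_mul]
    ring

lemma mulX_coeff {R : Type*} [CommRing R] (f : LaurentSeries R) (n : ℤ) :
    (mulX R f).coeff n = f.coeff (n - 1) := by
  have : n = (n - 1) + 1 := by ring
  rw [this]
  show (HahnSeries.single (1 : ℤ) (1 : R) * f).coeff ((n - 1) + 1) = _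
  rw [HahnSeries.coeff_single_mul_add, one_mul, add_sub_cancel_right]

/-- `R₋ = C̃⁻¹ ∘ M_x ∘ C̃`, where `C̃` is the invertible diagonal operator
`(C̃ f)_n = ρ_{−n} • f_n`. -/
theorem Rminus_conjugation (R : Type*) [CommRing R] (β γ : R) (G : Polynomial R)
    (hG : G.coeff 0 = 1)
    (ρ : ℤ → Rˣ) (hρ0 : ρ 0 = 1)
    (hρ : ∀ n : ℤ, (ρ n : R) = γ * G.eval ((n : R) * β) * (ρ (n - 1) : R)) :
    diagOp R (fun n => (ρ (-n) : R)) ∘ₗ diagOp R (fun n => (((ρ (-n))⁻¹ : Rˣ) : R)) =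
        LinearMap.id ∧
    diagOp R (fun n => (((ρ (-n))⁻¹ : Rˣ) : R)) ∘ₗ diagOp R (fun n => (ρ (-n) : R)) =
        LinearMap.id ∧
    Rminus R β γ G =
      diagOp R (fun n => (((ρ (-n))⁻¹ : Rˣ) : R)) ∘ₗ mulX R ∘ₗ
        diagOp R (fun n => (ρ (-n) : R)) := by
  refine ⟨?_, ?_, ?_⟩
  · ext f n
    simp [diagOp_coeff, ← mul_assoc, ← Units.val_mul]
  · ext f n
    simp [diagOp_coeff, ← mul_assoc, ← Units.val_mul]
  · ext f n
    have key : (ρ (-n + 1) : R) = γ * G.eval ((-n + 1 : ℤ) * β) * (ρ (-n) : R) := by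
      have := hρ (-n + 1)
      simpa using this
    simp only [LinearMap.comp_apply, LinearMap.smul_apply, Rminus, HahnSeries.coeff_smul,
      diagOp_coeff, mulX_coeff, aeval_smul_eulerD_coeff, smul_eq_mul]
    have h2 : (ρ (-(n - 1)) : R) = γ * G.eval ((-n + 1 : ℤ) * β) * (ρ (-n) : R) := by
      rw [show -(n - 1) = -n + 1 by ring]; exact key
    rw [h2]
    have harg : (-β) * ((n : R) - 1) = ((-n + 1 : ℤ) : R) * β := by push_cast; ring
    push_cast
    rw [show (-β) * ((n : R) - 1) = ((-(n : R)) + 1) * β by ring]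
    have hu : ((((ρ (-n))⁻¹ : Rˣ)) : R) * (ρ (-n) : R) = 1 := by
      rw [← Units.val_mul, inv_mul_cancel, Units.val_one]
    calc γ * (G.eval ((-(n : R) + 1) * β) * f.coeff (n - 1))
        = ((((ρ (-n))⁻¹ : Rˣ)) : R) * (ρ (-n) : R) * (γ * G.eval ((-(n : R) + 1) * β) * f.coeff (n - 1)) := by
          rw [hu, one_mul]; ring
      _ = ((((ρ (-n))⁻¹ : Rˣ)) : R) * (γ * G.eval ((-(n : R) + 1) * β) * (ρ (-n) : R) * f.coeff (n - 1)) := by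
          ring
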